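/- Laplacian-of-Gaussian form of the blur derivative: if z : ℝⁿ → ℝ is bounded and continuous, then for every t > 0 and x ∈ ℝⁿ, the derivative of the scale space in the scale direction satisfies ∂/∂t (G_t ⋆ z)(x) = (1/4)·((Δ G_t) ⋆ z)(x), where Δ G_t is the Laplacian of the Gaussian kernel. -/

import Mathlib

open MeasureTheory Real

/-- The Gaussian kernel at scale `t` on `ℝⁿ`: `G_t(x) = (π t)^(−n/2) · exp(−‖x‖²/t)`. -/
noncomputable def gaussKernel (n : ℕ) (t : ℝ) (x : EuclideanSpace ℝ (Fin n)) : ℝ :=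
  (Real.pi * t) ^ (-(n : ℝ) / 2) * Real.exp (-‖x‖ ^ 2 / t)

/-- Gaussian blur of `z` at scale `t`: `(G_t ⋆ z)(x) = ∫ G_t(x − y) z(y) dy`. -/
noncomputable def gaussBlur (n : ℕ) (t : ℝ) (z : EuclideanSpace ℝ (Fin n) → ℝ)
    (x : EuclideanSpace ℝ (Fin n)) : ℝ :=
  ∫ y, gaussKernel n t (x - y) * z y

/-- The Laplacian of `f : ℝⁿ → ℝ` at `x`: the sum of second partial derivatives. -/
noncomputable def laplacian (n : ℕ) (f : EuclideanSpace ℝ (Fin n) → ℝ)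
    (x : EuclideanSpace ℝ (Fin n)) : ℝ :=
  ∑ i : Fin n, fderiv ℝ (fun y => fderiv ℝ f y (EuclideanSpace.single i 1)) x
      (EuclideanSpace.single i 1)

/-! ### Auxiliary lemmas -/

lemma gaussKernel_continuous (n : ℕ) (s : ℝ) :
    Continuous (gaussKernel n s) := by
  unfold gaussKernel; fun_prop

lemma gaussKernel_nonneg (n : ℕ) {s : ℝ} (hs : 0 < s) (v : EuclideanSpace ℝ (Fin n)) :
    0 ≤ gaussKernel n s v := by
  unfold gaussKernel; positivity

lemma gauss_int (n : ℕ) {b : ℝ} (hb : 0 < b) :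
    Integrable (fun v : EuclideanSpace ℝ (Fin n) => Real.exp (-b * ‖v‖^2)) := by
  have h := (GaussianFourier.integrable_cexp_neg_mul_sq_norm_add (V := EuclideanSpace ℝ (Fin n))
    (b := (b:ℂ)) (by simpa using hb) 0 (0 : EuclideanSpace ℝ (Fin n))).norm
  simp only [Complex.norm_exp] at h
  convert h using 2 with v
  simp
  left
  rw [← Complex.ofReal_pow, Complex.ofReal_re]

lemma gauss_hasDerivAt (n : ℕ) {s : ℝ} (hs : 0 < s) (v : EuclideanSpace ℝ (Fin n)) :
    HasDerivAt (fun s => gaussKernel n s v)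
      (gaussKernel n s v * (‖v‖^2 / s^2 - n / (2*s))) s := by
  set a := ‖v‖^2 with ha
  have hπs : 0 < Real.pi * s := by positivity
  have hlin : HasDerivAt (fun s : ℝ => Real.pi * s) Real.pi s := by
    simpa using (hasDerivAt_id s).const_mul Real.pi
  have h1 : HasDerivAt (fun s : ℝ => (Real.pi * s) ^ (-(n:ℝ)/2))
      (Real.pi * (-(n:ℝ)/2) * (Real.pi * s) ^ (-(n:ℝ)/2 - 1)) s :=
    hlin.rpow_const (Or.inl hπs.ne')
  have h3 : HasDerivAt (fun s : ℝ => -a * s⁻¹) (a / s^2) s := by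
    convert (hasDerivAt_inv hs.ne').const_mul (-a) using 1
    · rfl
    · rfl
    field_simp
  have h2 : HasDerivAt (fun s : ℝ => Real.exp (-a / s))
      (Real.exp (-a / s) * (a / s^2)) s := by
    simpa only [div_eq_mul_inv] using h3.exp
  have h5 := h1.mul h2
  convert h5 using 1
  · rfl
  · rfl
  · rfl
  have hsub : (Real.pi * s) ^ (-(n:ℝ)/2 - 1) = (Real.pi * s) ^ (-(n:ℝ)/2) / (Real.pi * s) :=
    Real.rpow_sub_one hπs.ne' _
  rw [gaussKernel, hsub]
  field_simp
  ring

lemma gauss_hasFDerivAt (n : ℕ) {t : ℝ} (ht : 0 < t) (y : EuclideanSpace ℝ (Fin n)) :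
    HasFDerivAt (gaussKernel n t)
      ((gaussKernel n t y * (-2 / t)) • (innerSL ℝ y)) y := by
  have h0 : HasFDerivAt (fun y : EuclideanSpace ℝ (Fin n) => ‖y‖^2)
      (2 • innerSL ℝ y) y := (hasStrictFDerivAt_norm_sq y).hasFDerivAt
  have h1 : HasFDerivAt (fun y : EuclideanSpace ℝ (Fin n) => -‖y‖^2 / t)
      ((-1/t) • (2 • innerSL ℝ y)) y := by
    have := h0.const_mul (-1/t)
    convert this using 2 with w
    case e'_11 => ring
    all_goals rfl
  have h2 := h1.exp
  have h3 := h2.const_mul ((Real.pi * t) ^ (-(n:ℝ)/2))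
  convert h3 using 1
  case e'_11 => rfl
  case e'_12 =>
    ext w
    simp [gaussKernel]
    ring
  all_goals rfl

lemma gauss_fderiv_apply (n : ℕ) {t : ℝ} (ht : 0 < t) (y : EuclideanSpace ℝ (Fin n)) (i : Fin n) :
    fderiv ℝ (gaussKernel n t) y (EuclideanSpace.single i 1)
      = gaussKernel n t y * (-2 / t) * y i := by
  rw [(gauss_hasFDerivAt n ht y).fderiv]
  simp [EuclideanSpace.inner_single_right, real_inner_comm]

lemma gauss_laplacian (n : ℕ) {t : ℝ} (ht : 0 < t) (v : EuclideanSpace ℝ (Fin n)) :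
    laplacian n (gaussKernel n t) v
      = gaussKernel n t v * (4 * ‖v‖^2 / t^2 - 2 * n / t) := by
  have key : ∀ i : Fin n,
      fderiv ℝ (fun y => fderiv ℝ (gaussKernel n t) y (EuclideanSpace.single i 1)) v
        (EuclideanSpace.single i 1)
      = gaussKernel n t v * (4 * (v i)^2 / t^2 - 2 / t) := by
    intro i
    have hfun : (fun y => fderiv ℝ (gaussKernel n t) y (EuclideanSpace.single i 1))
        = fun y => gaussKernel n t y * ((-2 / t) * y i) := by
      funext y
      rw [gauss_fderiv_apply n ht y i]
      ring
    rw [hfun]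
    have hB : HasFDerivAt (fun y : EuclideanSpace ℝ (Fin n) => (-2/t) * y i)
        ((-2/t) • (EuclideanSpace.proj i : EuclideanSpace ℝ (Fin n) →L[ℝ] ℝ)) v := by
      exact (((EuclideanSpace.proj i : EuclideanSpace ℝ (Fin n) →L[ℝ] ℝ)).hasFDerivAt
        (x := v)).const_mul (-2/t)
    have hmul := (gauss_hasFDerivAt n ht v).mul' hB
    rw [HasFDerivAt.fderiv (f := fun y => gaussKernel n t y * (-2 / t * y i)) hmul]
    simp [EuclideanSpace.inner_single_right, real_inner_comm, gaussKernel]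
    ring
  rw [laplacian]
  simp only [key]
  rw [← Finset.mul_sum]
  congr 1
  have hnorm : ‖v‖^2 = ∑ i, (v i)^2 := by
    rw [EuclideanSpace.norm_eq, Real.sq_sqrt (by positivity)]
    simp [Real.norm_eq_abs, sq_abs]
  rw [hnorm, Finset.sum_sub_distrib]
  simp [← Finset.sum_div, Finset.card_univ]
  rw [← Finset.mul_sum]
  ring

lemma bound_aux {t s a : ℝ} (ht : 0 < t) (hs1 : t/2 < s) (hs2 : s < 3*t/2) (ha : 0 ≤ a) (n : ℕ) :
    Real.exp (-a/s) * |a/s^2 - n/(2*s)|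
      ≤ (16/t + n/t) * Real.exp (-(1/(4*t)) * a) := by
  have hs : 0 < s := lt_trans (by positivity) hs1
  set e := Real.exp (-(1/(4*t)) * a) with he
  have hepos : 0 < e := Real.exp_pos _
  have h1 : |a/s^2 - n/(2*s)| ≤ 4*a/t^2 + n/t := by
    have e1 : a/s^2 ≤ 4*a/t^2 := by
      have h : a/s^2 ≤ a/((t/2)^2) :=
        div_le_div_of_nonneg_left ha (by positivity) (pow_le_pow_left₀ (by positivity) hs1.le 2)
      calc a/s^2 ≤ a/((t/2)^2) := h
        _ = 4*a/t^2 := by field_simp; ring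
    have e2 : (n:ℝ)/(2*s) ≤ n/t :=
      div_le_div_of_nonneg_left (by positivity) (by positivity) (by linarith)
    calc |a/s^2 - n/(2*s)| ≤ |a/s^2| + |(n:ℝ)/(2*s)| := abs_sub _ _
      _ = a/s^2 + n/(2*s) := by
          rw [abs_of_nonneg (by positivity), abs_of_nonneg (by positivity)]
      _ ≤ 4*a/t^2 + n/t := add_le_add e1 e2
  have h2 : Real.exp (-a/s) ≤ e * e := by
    rw [he, ← Real.exp_add]
    apply Real.exp_le_exp.mpr
    have h : a/(2*t) ≤ a/s := div_le_div_of_nonneg_left ha hs (by linarith)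
    have hh : -(1/(4*t))*a + -(1/(4*t))*a = -(a/(2*t)) := by field_simp; ring
    rw [hh, neg_div]
    exact neg_le_neg h
  have he1 : e ≤ 1 := by
    rw [he]
    apply Real.exp_le_one_iff.mpr
    have : 0 ≤ (1/(4*t))*a := by positivity
    linarith
  have hu : a * e ≤ 4*t := by
    have hle : a/(4*t) ≤ Real.exp (a/(4*t)) := by linarith [Real.add_one_le_exp (a/(4*t))]
    have hexp : e = (Real.exp (a/(4*t)))⁻¹ := by
      rw [he, ← Real.exp_neg]; congr 1; field_simp
    rw [hexp, ← div_eq_mul_inv, div_le_iff₀ (Real.exp_pos _)]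
    calc a = 4*t*(a/(4*t)) := by field_simp
      _ ≤ 4*t*Real.exp (a/(4*t)) := mul_le_mul_of_nonneg_left hle (by positivity)
  have h3 : (4*a/t^2 + n/t) * e ≤ 16/t + n/t := by
    calc (4*a/t^2 + n/t) * e = (4/t^2)*(a*e) + (n/t)*e := by ring
      _ ≤ (4/t^2)*(4*t) + (n/t)*1 :=
          add_le_add (mul_le_mul_of_nonneg_left hu (by positivity))
            (mul_le_mul_of_nonneg_left he1 (by positivity))
      _ = 16/t + n/t := by field_simp; ring
  calc Real.exp (-a/s) * |a/s^2 - n/(2*s)| ≤ (e*e) * (4*a/t^2 + n/t) :=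
        mul_le_mul h2 h1 (abs_nonneg _) (by positivity)
    _ = ((4*a/t^2 + n/t)*e)*e := by ring
    _ ≤ (16/t + n/t)*e := mul_le_mul_of_nonneg_right h3 hepos.le

/-- Laplacian-of-Gaussian form of the blur derivative:
`∂/∂t (G_t ⋆ z)(x) = (1/4)·((Δ G_t) ⋆ z)(x)` for bounded continuous signals. -/
theorem blur_deriv_eq_laplacian_of_gaussian (n : ℕ)
    (z : EuclideanSpace ℝ (Fin n) → ℝ)
    (hz : Continuous z) (hb : ∃ C : ℝ, ∀ x, |z x| ≤ C)
    (t : ℝ) (ht : 0 < t) (x : EuclideanSpace ℝ (Fin n)) :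
    HasDerivAt (fun s => gaussBlur n s z x)
      ((1 / 4) * ∫ y, laplacian n (gaussKernel n t) (x - y) * z y) t := by
  obtain ⟨C, hC⟩ := hb
  have hC0 : 0 ≤ C := le_trans (abs_nonneg _) (hC x)
  have hp0 : (-(n:ℝ)/2) ≤ 0 :=
    div_nonpos_of_nonpos_of_nonneg (neg_nonpos.mpr (Nat.cast_nonneg n)) (by norm_num)
  set F' : ℝ → EuclideanSpace ℝ (Fin n) → ℝ :=
    fun s y => gaussKernel n s (x - y) * (‖x - y‖^2 / s^2 - n / (2*s)) * z y with hF'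
  set bound : EuclideanSpace ℝ (Fin n) → ℝ :=
    fun y => ((Real.pi * (t/2)) ^ (-(n:ℝ)/2) * ((16/t + n/t) * C))
      * Real.exp (-(1/(4*t)) * ‖x - y‖^2) with hbound
  have key := hasDerivAt_integral_of_dominated_loc_of_deriv_le (μ := volume)
      (F := fun s y => gaussKernel n s (x - y) * z y) (F' := F') (x₀ := t)
      (bound := bound) (s := Metric.ball t (t/2)) (Metric.ball_mem_nhds _ (by positivity))
      ?_ ?_ ?_ ?_ ?_ ?_
  · have heq : (1 / 4 : ℝ) * ∫ y, laplacian n (gaussKernel n t) (x - y) * z y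
        = ∫ y, F' t y := by
      rw [← integral_const_mul]
      congr 1
      funext y
      rw [gauss_laplacian n ht (x - y), hF']
      ring
    rw [heq]
    exact key.2
  · filter_upwards with s
    exact (((gaussKernel_continuous n s).comp (continuous_const.sub continuous_id)).mul
      hz).aestronglyMeasurable
  · apply Integrable.mono'
      (g := fun y => ((Real.pi * t) ^ (-(n:ℝ)/2) * C) * Real.exp (-(1/t) * ‖x - y‖^2))
    · exact ((gauss_int n (by positivity)).comp_sub_left x).const_mul _
    · exact (((gaussKernel_continuous n t).comp (continuous_const.sub continuous_id)).mul
        hz).aestronglyMeasurable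
    · filter_upwards with y
      rw [Real.norm_eq_abs, abs_mul, abs_of_nonneg (gaussKernel_nonneg n ht _)]
      unfold gaussKernel
      rw [show -‖x-y‖^2/t = -(1/t)*‖x-y‖^2 by ring]
      calc (Real.pi * t) ^ (-(n:ℝ)/2) * Real.exp (-(1/t) * ‖x-y‖^2) * |z y|
          ≤ (Real.pi * t) ^ (-(n:ℝ)/2) * Real.exp (-(1/t) * ‖x-y‖^2) * C :=
            mul_le_mul_of_nonneg_left (hC y) (by positivity)
        _ = (Real.pi * t) ^ (-(n:ℝ)/2) * C * Real.exp (-(1/t) * ‖x-y‖^2) := by ring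
  · apply Continuous.aestronglyMeasurable
    apply Continuous.mul _ hz
    apply Continuous.mul
    · exact (gaussKernel_continuous n t).comp (continuous_const.sub continuous_id)
    · fun_prop
  · filter_upwards with y s hsball
    rw [Metric.mem_ball, Real.dist_eq, abs_lt] at hsball
    have hs1 : t/2 < s := by linarith [hsball.1]
    have hs2 : s < 3*t/2 := by linarith [hsball.2]
    have hs : 0 < s := lt_trans (by positivity) hs1
    have ha : (0:ℝ) ≤ ‖x - y‖^2 := by positivity
    have hba := bound_aux ht hs1 hs2 ha n
    rw [hF', Real.norm_eq_abs, abs_mul, abs_mul,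
      abs_of_nonneg (gaussKernel_nonneg n hs _)]
    unfold gaussKernel
    have hrp : (Real.pi * s) ^ (-(n:ℝ)/2) ≤ (Real.pi * (t/2)) ^ (-(n:ℝ)/2) :=
      Real.rpow_le_rpow_of_nonpos (by positivity)
        (mul_le_mul_of_nonneg_left hs1.le Real.pi_pos.le) hp0
    calc (Real.pi * s) ^ (-(n:ℝ)/2) * Real.exp (-‖x-y‖^2/s)
          * |‖x-y‖^2/s^2 - n/(2*s)| * |z y|
        = (Real.pi * s) ^ (-(n:ℝ)/2)
            * (Real.exp (-‖x-y‖^2/s) * |‖x-y‖^2/s^2 - n/(2*s)|) * |z y| := by ring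
      _ ≤ (Real.pi * (t/2)) ^ (-(n:ℝ)/2)
            * ((16/t + n/t) * Real.exp (-(1/(4*t)) * ‖x-y‖^2)) * C :=
          mul_le_mul (mul_le_mul hrp hba (by positivity) (by positivity)) (hC y)
            (abs_nonneg _) (by positivity)
      _ = bound y := by rw [hbound]; ring
  · exact ((gauss_int n (by positivity)).comp_sub_left x).const_mul _
  · filter_upwards with y s hsball
    rw [Metric.mem_ball, Real.dist_eq, abs_lt] at hsball
    have hs : 0 < s := by obtain ⟨h1, h2⟩ := hsball; linarith
    exact (gauss_hasDerivAt n hs (x - y)).mul_const (z y)
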